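/- Let G be a finite group whose components (subnormal quasisimple subgroups) X_1, …, X_r are pairwise distinct, and let D ≤ G be an abelian p-subgroup. Suppose that for each i, D ∩ Z(X_i) is properly contained in D ∩ X_i. If x ∈ C_G(D) and conjugation by x permutes the set {X_1,…,X_r}, with X_i^x ≠ X_i implying X_i ∩ X_i^x ≤ Z(X_i), then x normalizes every X_i. -/

import Mathlib

/-- Component-fixing argument: let `X₁, …, X_r` be the (pairwise distinct) components of `G`,
`D` an abelian `p`-subgroup with `D ∩ Z(Xᵢ) < D ∩ Xᵢ` for each `i` (here
`Z(Xᵢ) = C_G(Xᵢ) ∩ Xᵢ`).  If `x ∈ C_G(D)` permutes the components by conjugation, and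
distinct components intersect in their centers, then `x` normalizes every `Xᵢ`. -/
theorem stmt12 {G : Type*} [Group G] {r : ℕ} (X : Fin r → Subgroup G)
    (hdistinct : ∀ i j, i ≠ j → X i ≠ X j)
    (p : ℕ) [Fact p.Prime] (D : Subgroup G) (hD : IsPGroup p D)
    (hDab : IsMulCommutative D)
    (hproper : ∀ i, D ⊓ (Subgroup.centralizer (X i : Set G) ⊓ X i) < D ⊓ X i)
    (x : G) (hx : x ∈ Subgroup.centralizer (D : Set G))
    (hperm : ∀ i, ∃ j, (X i).map (MulAut.conj x).toMonoidHom = X j)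
    (hint : ∀ i j, X i ≠ X j → X i ⊓ X j ≤ Subgroup.centralizer (X i : Set G)) :
    ∀ i, (X i).map (MulAut.conj x).toMonoidHom = X i := by
  intro i
  obtain ⟨j, hj⟩ := hperm i
  by_cases hij : X i = X j
  · rw [hj, hij]
  · exfalso
    -- D ⊓ X i ≤ X i ⊓ X j
    have key : D ⊓ X i ≤ X i ⊓ X j := by
      intro d hd
      obtain ⟨hdD, hdX⟩ := hd
      refine ⟨hdX, ?_⟩
      have hfix : x * d * x⁻¹ = d := by
        have hc : d * x = x * d := Subgroup.mem_centralizer_iff.mp hx d hdD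
        rw [← hc]; group
      have : (MulAut.conj x).toMonoidHom d ∈ (X i).map (MulAut.conj x).toMonoidHom :=
        Subgroup.mem_map_of_mem _ hdX
      rw [hj] at this
      simpa [MulAut.conj, hfix] using this
    have hle : D ⊓ X i ≤ D ⊓ (Subgroup.centralizer (X i : Set G) ⊓ X i) := by
      intro d hd
      exact ⟨hd.1, hint i j hij (key hd), hd.2⟩
    exact absurd hle (not_le_of_gt (hproper i))
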